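/- Let T_n be a strongly connected arc-colored tournament of order n. Then the total number of non-rainbow triangles in T_n is at most n·(n−1)·Δ^{-mon}(T_n)/2. -/

import Mathlib

open Finset

/-- A tournament on vertex type `V`: between every two distinct vertices there is
exactly one arc, and there are no loops. -/
structure Tournament (V : Type) where
  arc : V → V → Bool
  irrefl : ∀ v, arc v v = false
  oneArc : ∀ u v : V, u ≠ v → arc u v = !arc v u

namespace Tournament

variable {V : Type} [Fintype V]

/-- Outdegree `d⁺(v)`. -/
def outDeg (T : Tournament V) (v : V) : ℕ :=
  (univ.filter fun w => T.arc v w).card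

/-- Indegree `d⁻(v)`. -/
def inDeg (T : Tournament V) (v : V) : ℕ :=
  (univ.filter fun u => T.arc u v).card

/-- `δ(v) = min{d⁺(v), d⁻(v)}`. -/
def minDeg (T : Tournament V) (v : V) : ℕ :=
  min (T.outDeg v) (T.inDeg v)

/-- The irregularity `i(T)`: the maximum of `|d⁺(v) − d⁻(v)|` over all vertices. -/
def irreg (T : Tournament V) : ℕ :=
  univ.sup fun v => ((T.outDeg v : ℤ) - (T.inDeg v : ℤ)).natAbs

/-- Strong connectivity: every vertex can reach every other vertex by a directed path. -/
def StronglyConnected (T : Tournament V) : Prop :=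
  ∀ u v : V, Relation.ReflTransGen (fun a b => T.arc a b) u v

/-- The number of in-arcs of `v` with color `c`. -/
def monoInDeg (T : Tournament V) (C : V → V → ℕ) (v : V) (c : ℕ) : ℕ :=
  (univ.filter fun u => T.arc u v ∧ C u v = c).card

/-- The number of out-arcs of `v` with color `c`. -/
def monoOutDeg (T : Tournament V) (C : V → V → ℕ) (v : V) (c : ℕ) : ℕ :=
  (univ.filter fun w => T.arc v w ∧ C v w = c).card

/-- The maximum monochromatic indegree `Δ^{-mon}(T)`. -/
def maxMonoIn (T : Tournament V) (C : V → V → ℕ) : ℕ :=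
  univ.sup fun v => (univ.image fun u => C u v).sup (T.monoInDeg C v)

/-- The maximum monochromatic outdegree `Δ^{+mon}(T)`. -/
def maxMonoOut (T : Tournament V) (C : V → V → ℕ) : ℕ :=
  univ.sup fun v => (univ.image fun w => C v w).sup (T.monoOutDeg C v)

/-- The directed triangles through `v`, encoded as ordered pairs `(w, u)` with
arcs `v → w → u → v`.  This gives each triangle through `v` exactly once. -/
def trianglesThrough (T : Tournament V) (v : V) : Finset (V × V) :=
  univ.filter fun p => T.arc v p.1 ∧ T.arc p.1 p.2 ∧ T.arc p.2 v

/-- The rainbow triangles through `v`: all three arcs have pairwise distinct colors. -/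
def rainbowTrianglesThrough (T : Tournament V) (C : V → V → ℕ) (v : V) : Finset (V × V) :=
  (T.trianglesThrough v).filter fun p =>
    C v p.1 ≠ C p.1 p.2 ∧ C p.1 p.2 ≠ C p.2 v ∧ C p.2 v ≠ C v p.1

/-- The non-rainbow triangles through `v`: some two arcs share a color. -/
def nonRainbowTrianglesThrough (T : Tournament V) (C : V → V → ℕ) (v : V) : Finset (V × V) :=
  (T.trianglesThrough v).filter fun p =>
    ¬(C v p.1 ≠ C p.1 p.2 ∧ C p.1 p.2 ≠ C p.2 v ∧ C p.2 v ≠ C v p.1)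

/-- Ordered triples `(x, y, z)` with arcs `x → y → z → x`.  Each directed triangle
is counted exactly three times (once per cyclic rotation). -/
def triangleTriples (T : Tournament V) : Finset (V × V × V) :=
  univ.filter fun p => T.arc p.1 p.2.1 ∧ T.arc p.2.1 p.2.2 ∧ T.arc p.2.2 p.1

/-- Ordered triples representing rainbow triangles (each rainbow triangle thrice). -/
def rainbowTriples (T : Tournament V) (C : V → V → ℕ) : Finset (V × V × V) :=
  T.triangleTriples.filter fun p =>
    C p.1 p.2.1 ≠ C p.2.1 p.2.2 ∧ C p.2.1 p.2.2 ≠ C p.2.2 p.1 ∧ C p.2.2 p.1 ≠ C p.1 p.2.1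

/-- Ordered triples representing non-rainbow triangles (each such triangle thrice). -/
def nonRainbowTriples (T : Tournament V) (C : V → V → ℕ) : Finset (V × V × V) :=
  T.triangleTriples.filter fun p =>
    ¬(C p.1 p.2.1 ≠ C p.2.1 p.2.2 ∧ C p.2.1 p.2.2 ≠ C p.2.2 p.1 ∧ C p.2.2 p.1 ≠ C p.1 p.2.1)

end Tournament

set_option linter.unusedSectionVars false
set_option linter.unusedVariables false

section Aux

open Tournament

variable {V : Type} [Fintype V]

private lemma monoInDeg_le_max (T : Tournament V) (C : V → V → ℕ) (v : V) (c : ℕ) :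
    T.monoInDeg C v c ≤ T.maxMonoIn C := by
  by_cases h : (univ.filter fun u => T.arc u v ∧ C u v = c).Nonempty
  · obtain ⟨u, hu⟩ := h
    simp only [mem_filter] at hu
    calc T.monoInDeg C v c ≤ (univ.image fun u => C u v).sup (T.monoInDeg C v) :=
          Finset.le_sup (mem_image.mpr ⟨u, mem_univ u, hu.2.2⟩)
      _ ≤ T.maxMonoIn C :=
          Finset.le_sup (f := fun v => (univ.image fun u => C u v).sup (T.monoInDeg C v))
            (mem_univ v)
  · have h0 : T.monoInDeg C v c = 0 := by
      simp only [Tournament.monoInDeg, Finset.not_nonempty_iff_eq_empty.mp h, card_empty]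
    omega

private def arcSet (T : Tournament V) : Finset (V × V) :=
  univ.filter fun q => T.arc q.1 q.2

private lemma two_mul_arcSet_card (T : Tournament V) :
    2 * (arcSet T).card ≤ Fintype.card V * (Fintype.card V - 1) := by
  classical
  set D : Finset (V × V) := univ.filter fun q => q.1 ≠ q.2 with hD
  have hsub : arcSet T ∪ (arcSet T).image Prod.swap ⊆ D := by
    intro q hq
    have hmem : q.1 ≠ q.2 → q ∈ D := fun h => by simp [hD, h]
    apply hmem
    rcases Finset.mem_union.mp hq with h | h
    · have harc : T.arc q.1 q.2 = true := (mem_filter.mp h).2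
      intro he; rw [he, T.irrefl] at harc; exact Bool.false_ne_true harc
    · obtain ⟨p, hp, heq⟩ := Finset.mem_image.mp h
      have harc : T.arc p.1 p.2 = true := (mem_filter.mp hp).2
      subst heq
      intro he
      have h12 : p.1 = p.2 := (he : p.2 = p.1).symm
      rw [h12, T.irrefl] at harc; exact Bool.false_ne_true harc
  have hdisj : Disjoint (arcSet T) ((arcSet T).image Prod.swap) := by
    rw [Finset.disjoint_left]
    intro q hq hq'
    obtain ⟨p, hp, heq⟩ := Finset.mem_image.mp hq'
    have hp2 : T.arc p.1 p.2 = true := (mem_filter.mp hp).2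
    subst heq
    have hq2 : T.arc p.2 p.1 = true := (mem_filter.mp hq).2
    have hne : p.1 ≠ p.2 := by
      intro h; rw [h, T.irrefl] at hp2; exact Bool.false_ne_true hp2
    have h1 := T.oneArc p.1 p.2 hne
    rw [hp2, hq2] at h1
    simp at h1
  have hsw : ((arcSet T).image Prod.swap).card = (arcSet T).card :=
    Finset.card_image_of_injective _ Prod.swap_injective
  have hDcard : D.card + Fintype.card V = Fintype.card V * Fintype.card V := by
    have h1 : (univ.filter fun q : V × V => ¬ q.1 ≠ q.2) = univ.image (fun v : V => (v, v)) := by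
      ext ⟨a, b⟩
      simp only [mem_filter, mem_univ, true_and, not_not, mem_image]
      constructor
      · rintro rfl; exact ⟨a, rfl⟩
      · rintro ⟨v, heq⟩
        injection heq with e1 e2
        rw [← e1, ← e2]
    have h2 := Finset.card_filter_add_card_filter_not
      (s := (univ : Finset (V × V))) (p := fun q : V × V => q.1 ≠ q.2)
    rw [h1, Finset.card_image_of_injective _ (fun a b h => congrArg Prod.fst h)] at h2
    simpa [Fintype.card_prod, hD] using h2
  have hkey : Fintype.card V * (Fintype.card V - 1)
      = Fintype.card V * Fintype.card V - Fintype.card V := Nat.mul_pred ..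
  have hu := Finset.card_union_of_disjoint hdisj
  have hle := Finset.card_le_card hsub
  rw [hu, hsw] at hle
  omega

private def monoPaths (T : Tournament V) (C : V → V → ℕ) : Finset (V × V × V) :=
  univ.filter fun p => T.arc p.1 p.2.1 ∧ T.arc p.2.1 p.2.2 ∧ C p.1 p.2.1 = C p.2.1 p.2.2

private lemma monoPaths_card_le (T : Tournament V) (C : V → V → ℕ) :
    (monoPaths T C).card ≤ T.maxMonoIn C * (arcSet T).card := by
  classical
  apply Finset.card_le_mul_card_image_of_maps_to
    (f := fun p : V × V × V => p.2) (t := arcSet T)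
  · intro p hp
    simp only [monoPaths, mem_filter, mem_univ, true_and] at hp
    exact mem_filter.mpr ⟨mem_univ _, hp.2.1⟩
  · intro q hq
    have hf : ((monoPaths T C).filter fun p => p.2 = q).card
        ≤ T.monoInDeg C q.1 (C q.1 q.2) := by
      apply Finset.card_le_card_of_injOn (fun p => p.1)
      · intro p hp
        simp only [Finset.mem_coe, monoPaths, mem_filter, mem_univ, true_and] at hp
        obtain ⟨⟨h1, h2, h3⟩, h4⟩ := hp
        subst h4
        simp only [Finset.mem_coe, Tournament.monoInDeg, mem_filter, mem_univ, true_and]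
        exact ⟨h1, h3⟩
      · intro p hp p' hp' h
        rw [Finset.mem_coe, mem_filter] at hp hp'
        exact Prod.ext h (hp.2.trans hp'.2.symm)
    exact hf.trans (monoInDeg_le_max T C q.1 (C q.1 q.2))

private lemma nonRainbow_card_le (T : Tournament V) (C : V → V → ℕ) :
    (T.nonRainbowTriples C).card ≤ 3 * (T.maxMonoIn C * (arcSet T).card) := by
  classical
  set S1 := (T.triangleTriples).filter fun p => C p.1 p.2.1 = C p.2.1 p.2.2 with hS1
  set S2 := (T.triangleTriples).filter fun p => C p.2.1 p.2.2 = C p.2.2 p.1 with hS2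
  set S3 := (T.triangleTriples).filter fun p => C p.2.2 p.1 = C p.1 p.2.1 with hS3
  have hsub : T.nonRainbowTriples C ⊆ S1 ∪ S2 ∪ S3 := by
    intro p hp
    simp only [Tournament.nonRainbowTriples, mem_filter] at hp
    simp only [mem_union, hS1, hS2, hS3, mem_filter]
    obtain ⟨ht, hc⟩ := hp
    by_cases h1 : C p.1 p.2.1 = C p.2.1 p.2.2
    · exact Or.inl (Or.inl ⟨ht, h1⟩)
    by_cases h2 : C p.2.1 p.2.2 = C p.2.2 p.1
    · exact Or.inl (Or.inr ⟨ht, h2⟩)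
    by_cases h3 : C p.2.2 p.1 = C p.1 p.2.1
    · exact Or.inr ⟨ht, h3⟩
    · exact absurd ⟨h1, h2, h3⟩ hc
  have hS1le : S1.card ≤ (monoPaths T C).card := by
    apply Finset.card_le_card
    intro p hp
    simp only [hS1, Tournament.triangleTriples, mem_filter, mem_univ, true_and] at hp
    simp only [monoPaths, mem_filter, mem_univ, true_and]
    exact ⟨hp.1.1, hp.1.2.1, hp.2⟩
  have hS2le : S2.card ≤ (monoPaths T C).card := by
    apply Finset.card_le_card_of_injOn (fun p => (p.2.1, p.2.2, p.1))
    · intro p hp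
      simp only [hS2, Tournament.triangleTriples, Finset.mem_coe, mem_filter, mem_univ, true_and] at hp
      simp only [Finset.mem_coe, monoPaths, mem_filter, mem_univ, true_and]
      exact ⟨hp.1.2.1, hp.1.2.2, hp.2⟩
    · intro p _ q _ h
      simp only [Prod.mk.injEq] at h
      exact Prod.ext h.2.2 (Prod.ext h.1 h.2.1)
  have hS3le : S3.card ≤ (monoPaths T C).card := by
    apply Finset.card_le_card_of_injOn (fun p => (p.2.2, p.1, p.2.1))
    · intro p hp
      simp only [hS3, Tournament.triangleTriples, Finset.mem_coe, mem_filter, mem_univ, true_and] at hp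
      simp only [Finset.mem_coe, monoPaths, mem_filter, mem_univ, true_and]
      exact ⟨hp.1.2.2, hp.1.1, hp.2⟩
    · intro p _ q _ h
      simp only [Prod.mk.injEq] at h
      exact Prod.ext h.2.1 (Prod.ext h.2.2 h.1)
  have hmp := monoPaths_card_le T C
  have hcu1 := Finset.card_union_le (S1 ∪ S2) S3
  have hcu2 := Finset.card_union_le S1 S2
  have hcc := Finset.card_le_card hsub
  omega

end Aux

/-- Lemma 4: A strongly connected arc-colored tournament of order `n`
has at most `n(n−1)Δ^{-mon}/2` non-rainbow triangles.  Here
`(T.nonRainbowTriples C).card / 3` is the number of non-rainbow triangles, since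
each triangle is represented by its three cyclic rotations. -/
theorem count_nonrainbow_triangles_upper_bound
    {V : Type} [Fintype V] (n : ℕ) (hn : Fintype.card V = n)
    (T : Tournament V) (C : V → V → ℕ)
    (hsc : T.StronglyConnected) :
    ((T.nonRainbowTriples C).card : ℚ) / 3 ≤
      (n : ℚ) * ((n : ℚ) - 1) * (T.maxMonoIn C : ℚ) / 2 := by
  subst hn
  have h1 := nonRainbow_card_le T C
  have h2 := two_mul_arcSet_card T
  set n := Fintype.card V with hnn
  set E := (arcSet T).card with hE
  set Δ := T.maxMonoIn C with hΔdef
  have hq1 : ((T.nonRainbowTriples C).card : ℚ) ≤ 3 * ((Δ : ℚ) * (E : ℚ)) := by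
    exact_mod_cast h1
  have hq2 : 2 * (E : ℚ) ≤ (n : ℚ) * ((n : ℚ) - 1) := by
    rcases Nat.eq_zero_or_pos n with h | h
    · rw [h] at h2
      simp at h2
      simp [h2, h]
    · calc 2 * (E : ℚ) = ((2 * E : ℕ) : ℚ) := by push_cast; ring
        _ ≤ ((n * (n - 1) : ℕ) : ℚ) := by exact_mod_cast h2
        _ = (n : ℚ) * ((n : ℚ) - 1) := by
            rw [Nat.cast_mul, Nat.cast_sub h]; norm_num
  have hΔ : (0 : ℚ) ≤ (Δ : ℚ) := by positivity
  nlinarith [hq1, hq2, hΔ, mul_le_mul_of_nonneg_left hq2 hΔ]
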